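/- arXiv:2012.14793 — 2 statements merged into one kernel-verified Lean document; each statement's English description precedes it below -/
import Mathlib

section
/- The rational function r_p(t) = -∑_{m,l=0}^{p-1} Ω_{ml} ⊗ (-1)^m binom(m+l, l) t^{-1-m-l} satisfies the classical Yang–Baxter equation in g_p^{⊗3}: [r_p^{(12)}(t₁-t₂), r_p^{(13)}(t₁-t₃)] + [r_p^{(13)}(t₁-t₃), r_p^{(23)}(t₂-t₃)] + [r_p^{(12)}(t₁-t₂), r_p^{(23)}(t₂-t₃)] = 0 for pairwise distinct t₁, t₂, t₃ ∈ ℂ. -/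
set_option synthInstance.maxHeartbeats 1000000
set_option maxHeartbeats 1600000

open scoped TensorProduct
open Finset

/-- Scalar extension of a complex Lie algebra is a complex Lie algebra. -/
noncomputable instance (priority := low) extendScalarsLieAlgebraOverBase
    {A g : Type*} [CommRing A] [Algebra ℂ A] [LieRing g] [LieAlgebra ℂ g] :
    LieAlgebra ℂ (A ⊗[ℂ] g) :=
  { lie_smul := fun c x y => by
      rw [← algebraMap_smul A c y, lie_smul, algebraMap_smul] }

/-- The ring `ℂ[z]/(z^p)` of truncated polynomials. -/
noncomputable abbrev TruncPoly (p : ℕ) : Type :=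
  Polynomial ℂ ⧸ Ideal.span {(Polynomial.X : Polynomial ℂ) ^ p}

/-- The class of `z^m` in `ℂ[z]/(z^p)`. -/
noncomputable def zpow (p m : ℕ) : TruncPoly p :=
  Ideal.Quotient.mk _ ((Polynomial.X : Polynomial ℂ) ^ m)

/-- The truncated current Lie algebra `g_p = g[z]/z^p g[z]`. -/
noncomputable abbrev TruncCurrent (p : ℕ) (g : Type*) [LieRing g] [LieAlgebra ℂ g] :=
  (TruncPoly p) ⊗[ℂ] g

section

variable (p : ℕ) {g : Type*} [LieRing g] [LieAlgebra ℂ g]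
  {ι : Type*} [Fintype ι] (b b' : ι → g)

/-- The enveloping algebra `U(g_p)` of the truncated current algebra. -/
noncomputable abbrev UEnv := UniversalEnvelopingAlgebra ℂ (TruncCurrent p g)

/-- The triple tensor power `U(g_p)^{⊗3}`. -/
noncomputable abbrev UEnv3 := (UEnv p (g := g) ⊗[ℂ] UEnv p (g := g)) ⊗[ℂ] UEnv p (g := g)

/-- The image `X z^m` of a basis element in `U(g_p)`. -/
noncomputable def cur (m : ℕ) (x : g) : UEnv p (g := g) :=
  UniversalEnvelopingAlgebra.ι ℂ (zpow p m ⊗ₜ[ℂ] x)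

/-- `r_p^{(12)}(t)`: the rational `r`-matrix placed in slots 1 and 2 of `U(g_p)^{⊗3}`. -/
noncomputable def r12 (t : ℂ) : UEnv3 p (g := g) :=
  -∑ m ∈ range p, ∑ l ∈ range p, (((-1 : ℂ) ^ m * ((m + l).choose l : ℂ)
      * t ^ (-(1 : ℤ) - m - l)) •
    ∑ k, (cur p m (b k) ⊗ₜ[ℂ] cur p l (b' k)) ⊗ₜ[ℂ] (1 : UEnv p (g := g)))

/-- `r_p^{(13)}(t)`: the rational `r`-matrix placed in slots 1 and 3 of `U(g_p)^{⊗3}`. -/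
noncomputable def r13 (t : ℂ) : UEnv3 p (g := g) :=
  -∑ m ∈ range p, ∑ l ∈ range p, (((-1 : ℂ) ^ m * ((m + l).choose l : ℂ)
      * t ^ (-(1 : ℤ) - m - l)) •
    ∑ k, (cur p m (b k) ⊗ₜ[ℂ] (1 : UEnv p (g := g))) ⊗ₜ[ℂ] cur p l (b' k))

/-- `r_p^{(23)}(t)`: the rational `r`-matrix placed in slots 2 and 3 of `U(g_p)^{⊗3}`. -/
noncomputable def r23 (t : ℂ) : UEnv3 p (g := g) :=
  -∑ m ∈ range p, ∑ l ∈ range p, (((-1 : ℂ) ^ m * ((m + l).choose l : ℂ)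
      * t ^ (-(1 : ℤ) - m - l)) •
    ∑ k, ((1 : UEnv p (g := g)) ⊗ₜ[ℂ] cur p m (b k)) ⊗ₜ[ℂ] cur p l (b' k))

end

section portinst
attribute [local instance 100] LieRing.ofAssociativeRing

-- ===== basic helpers =====

lemma lie_sum' {L : Type*} [LieRing L] {α : Type*} (x : L) (s : Finset α) (f : α → L) :
    ⁅x, ∑ i ∈ s, f i⁆ = ∑ i ∈ s, ⁅x, f i⁆ :=
  map_sum (AddMonoidHom.mk' (fun y => ⁅x, y⁆) (lie_add x)) f s

lemma sum_lie' {L : Type*} [LieRing L] {α : Type*} (x : L) (s : Finset α) (f : α → L) :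
    ⁅∑ i ∈ s, f i, x⁆ = ∑ i ∈ s, ⁅f i, x⁆ :=
  map_sum (AddMonoidHom.mk' (fun y => ⁅y, x⁆) (fun a b => add_lie a b x)) f s

lemma zpow_mul_zpow (p m l : ℕ) : zpow p m * zpow p l = zpow p (m + l) := by
  rw [zpow, zpow, zpow, ← map_mul, ← pow_add]

lemma zpowp_eq_zero (p m : ℕ) (h : p ≤ m) : zpow p m = 0 := by
  rw [zpow, Ideal.Quotient.eq_zero_iff_mem, Ideal.mem_span_singleton]
  exact pow_dvd_pow _ h

section basiclemmas

variable (p : ℕ) {g : Type*} [LieRing g] [LieAlgebra ℂ g]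

lemma cur_eq_zero (m : ℕ) (x : g) (h : p ≤ m) : cur p m x = 0 := by
  rw [cur, zpowp_eq_zero p m h, TensorProduct.zero_tmul, map_zero]

lemma cur_lie (m l : ℕ) (x y : g) :
    ⁅cur p m x, cur p l y⁆ = cur p (m + l) ⁅x, y⁆ := by
  rw [cur, cur, cur, ← LieHom.map_lie, LieAlgebra.ExtendScalars.bracket_tmul, zpow_mul_zpow]

/-- `cur` as a linear map in the Lie algebra argument. -/
noncomputable def curL (m : ℕ) : g →ₗ[ℂ] UEnv p (g := g) :=
  (UniversalEnvelopingAlgebra.ι ℂ).toLinearMap ∘ₗ TensorProduct.mk ℂ (TruncPoly p) g (zpow p m)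

lemma curL_apply (m : ℕ) (x : g) : curL p m x = cur p m x := rfl

end basiclemmas

-- ===== dual basis / invariance identities =====

section duality

variable {g : Type*} [LieRing g] [LieAlgebra ℂ g]
  {ι : Type*} [Fintype ι] [DecidableEq ι]
  (B : LinearMap.BilinForm ℂ g)
  (b : Module.Basis ι ℂ g) (b' : ι → g)

include b in
lemma expand1 (hdual : ∀ i j, B (b i) (b' j) = if i = j then 1 else 0) (y : g) :
    y = ∑ i, B y (b' i) • b i := by
  conv_lhs => rw [← Module.Basis.sum_repr b y]
  apply Finset.sum_congr rfl
  intro i _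
  congr 1
  conv_rhs => rw [← Module.Basis.sum_repr b y]
  simp only [map_sum, LinearMap.sum_apply, map_smul, LinearMap.smul_apply, smul_eq_mul]
  rw [Finset.sum_eq_single i]
  · rw [hdual, if_pos rfl, mul_one]
  · intro j _ hj
    rw [hdual, if_neg hj, mul_zero]
  · intro h; exact absurd (Finset.mem_univ i) h

lemma expand2 (hBnd : B.Nondegenerate) (hBsymm : ∀ x y : g, B x y = B y x)
    (hdual : ∀ i j, B (b i) (b' j) = if i = j then 1 else 0) (y : g) :
    y = ∑ i, B (b i) y • b' i := by
  have hbasis : ∀ i, B (b i) (y - ∑ j, B (b j) y • b' j) = 0 := by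
    intro i
    simp only [map_sub, LinearMap.sub_apply, map_sum, LinearMap.sum_apply, map_smul,
      LinearMap.smul_apply, smul_eq_mul]
    rw [Finset.sum_eq_single i]
    · rw [hdual, if_pos rfl, mul_one, sub_self]
      
    · intro j _ hj
      rw [hdual, if_neg (fun h => hj h.symm), mul_zero]
    · intro h; exact absurd (Finset.mem_univ i) h
  have hall : ∀ x : g, B x (y - ∑ j, B (b j) y • b' j) = 0 := by
    intro x
    conv_lhs => rw [expand1 B b b' hdual x]
    simp only [map_sum, LinearMap.sum_apply, map_smul, LinearMap.smul_apply]
    apply Finset.sum_eq_zero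
    intro i _
    rw [hbasis, smul_zero]
  have : (y - ∑ j, B (b j) y • b' j) = 0 := by
    apply hBnd.1
    intro n
    rw [hBsymm]
    exact hall n
  rw [sub_eq_zero] at this
  exact this

/-- The key adjoint-invariance identity for dual bases, in `g ⊗ g`. -/
lemma key_invariance (hBnd : B.Nondegenerate) (hBsymm : ∀ x y : g, B x y = B y x)
    (hBinv : ∀ x y z : g, B ⁅x, y⁆ z = B x ⁅y, z⁆)
    (hdual : ∀ i j, B (b i) (b' j) = if i = j then 1 else 0) (x : g) :
    (∑ k, ⁅x, b k⁆ ⊗ₜ[ℂ] b' k) + (∑ k, (b k) ⊗ₜ[ℂ] ⁅x, b' k⁆) = (0 : g ⊗[ℂ] g) := by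
  have h1 : (∑ k, ⁅x, b k⁆ ⊗ₜ[ℂ] b' k)
      = ∑ k, ∑ i, (B ⁅x, b k⁆ (b' i)) • ((b i) ⊗ₜ[ℂ] b' k) := by
    apply Finset.sum_congr rfl
    intro k _
    conv_lhs => rw [expand1 B b b' hdual ⁅x, b k⁆]
    rw [TensorProduct.sum_tmul]
    apply Finset.sum_congr rfl
    intro i _
    rw [TensorProduct.smul_tmul']
  have h2 : (∑ k, (b k) ⊗ₜ[ℂ] ⁅x, b' k⁆)
      = ∑ k, ∑ i, (B (b i) ⁅x, b' k⁆) • ((b k) ⊗ₜ[ℂ] b' i) := by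
    apply Finset.sum_congr rfl
    intro k _
    conv_lhs => rw [expand2 B b b' hBnd hBsymm hdual ⁅x, b' k⁆]
    rw [TensorProduct.tmul_sum]
    apply Finset.sum_congr rfl
    intro i _
    rw [TensorProduct.tmul_smul]
  rw [h1, h2, Finset.sum_comm (s := Finset.univ) (t := Finset.univ)
    (f := fun k i => (B (b i) ⁅x, b' k⁆) • ((b k) ⊗ₜ[ℂ] b' i))]
  rw [← Finset.sum_add_distrib]
  apply Finset.sum_eq_zero
  intro k _
  rw [← Finset.sum_add_distrib]
  apply Finset.sum_eq_zero
  intro i _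
  rw [← add_smul]
  have : B ⁅x, b k⁆ (b' i) + B (b k) ⁅x, b' i⁆ = 0 := by
    rw [← hBinv (b k) x (b' i)]
    have hskew : ⁅b k, x⁆ = -⁅x, b k⁆ := by rw [← lie_skew]
    rw [hskew, map_neg, LinearMap.neg_apply, add_neg_cancel]
  rw [this, zero_smul]

end duality

-- ===== tensor-slot elements and their brackets =====

section omegas

variable (p : ℕ) {g : Type*} [LieRing g] [LieAlgebra ℂ g]
  {ι : Type*} [Fintype ι] (b b' : ι → g)

/-- `∑_{k,j} (X_k z^a ⊗ [X^k, X_j] z^c ⊗ X^j z^e)`-type elements. -/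
noncomputable def F1 (a c e : ℕ) : UEnv3 p (g := g) :=
  ∑ k, ∑ j, (cur p a ⁅b k, b j⁆ ⊗ₜ[ℂ] cur p c (b' k)) ⊗ₜ[ℂ] cur p e (b' j)

noncomputable def F2 (a c e : ℕ) : UEnv3 p (g := g) :=
  ∑ k, ∑ j, (cur p a (b k) ⊗ₜ[ℂ] cur p c (b j)) ⊗ₜ[ℂ] cur p e ⁅b' k, b' j⁆

noncomputable def F3 (a c e : ℕ) : UEnv3 p (g := g) :=
  ∑ k, ∑ j, (cur p a (b k) ⊗ₜ[ℂ] cur p c ⁅b' k, b j⁆) ⊗ₜ[ℂ] cur p e (b' j)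

lemma F3_zero1 (a c e : ℕ) (h : p ≤ a) : F3 p b b' a c e = 0 := by
  apply Finset.sum_eq_zero; intro k _
  apply Finset.sum_eq_zero; intro j _
  rw [cur_eq_zero p a _ h, TensorProduct.zero_tmul, TensorProduct.zero_tmul]

lemma F3_zero2 (a c e : ℕ) (h : p ≤ c) : F3 p b b' a c e = 0 := by
  apply Finset.sum_eq_zero; intro k _
  apply Finset.sum_eq_zero; intro j _
  rw [cur_eq_zero p c _ h, TensorProduct.tmul_zero, TensorProduct.zero_tmul]

lemma F3_zero3 (a c e : ℕ) (h : p ≤ e) : F3 p b b' a c e = 0 := by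
  apply Finset.sum_eq_zero; intro k _
  apply Finset.sum_eq_zero; intro j _
  rw [cur_eq_zero p e _ h, TensorProduct.tmul_zero]

variable {b b'} in
/-- transfer of the invariance identity: `F1 = -F3`. -/
lemma F1_eq_neg_F3
    [DecidableEq ι]
    (hkey : ∀ x : g, (∑ k, ⁅x, b k⁆ ⊗ₜ[ℂ] b' k) + (∑ k, (b k) ⊗ₜ[ℂ] ⁅x, b' k⁆)
      = (0 : g ⊗[ℂ] g))
    (a c e : ℕ) : F1 p b b' a c e = - F3 p b b' a c e := by
  rw [eq_neg_iff_add_eq_zero]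
  have c1 : F1 p b b' a c e
      = ∑ j, ∑ k, (cur p a ⁅b k, b j⁆ ⊗ₜ[ℂ] cur p c (b' k)) ⊗ₜ[ℂ] cur p e (b' j) :=
    Finset.sum_comm
  have c3 : F3 p b b' a c e
      = ∑ j, ∑ k, (cur p a (b k) ⊗ₜ[ℂ] cur p c ⁅b' k, b j⁆) ⊗ₜ[ℂ] cur p e (b' j) :=
    Finset.sum_comm
  rw [c1, c3, ← Finset.sum_add_distrib]
  apply Finset.sum_eq_zero
  intro j _
  set Φ : g ⊗[ℂ] g →ₗ[ℂ] UEnv3 p (g := g) :=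
    ((TensorProduct.mk ℂ (UEnv p (g := g) ⊗[ℂ] UEnv p (g := g)) (UEnv p (g := g))).flip
      (cur p e (b' j))) ∘ₗ (TensorProduct.map (curL p a) (curL p c)) with hΦdef
  have hΦ : ∀ (x y : g), Φ (x ⊗ₜ[ℂ] y)
      = (cur p a x ⊗ₜ[ℂ] cur p c y) ⊗ₜ[ℂ] cur p e (b' j) := by
    intro x y
    rw [hΦdef, LinearMap.comp_apply, TensorProduct.map_tmul, LinearMap.flip_apply]
    rfl
  have e1 : ∑ k, (cur p a ⁅b k, b j⁆ ⊗ₜ[ℂ] cur p c (b' k)) ⊗ₜ[ℂ] cur p e (b' j)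
      = Φ (∑ k, ⁅b k, b j⁆ ⊗ₜ[ℂ] b' k) := by
    rw [map_sum]
    exact Finset.sum_congr rfl (fun k _ => (hΦ _ _).symm)
  have e3 : ∑ k, (cur p a (b k) ⊗ₜ[ℂ] cur p c ⁅b' k, b j⁆) ⊗ₜ[ℂ] cur p e (b' j)
      = Φ (∑ k, (b k) ⊗ₜ[ℂ] ⁅b' k, b j⁆) := by
    rw [map_sum]
    exact Finset.sum_congr rfl (fun k _ => (hΦ _ _).symm)
  rw [e1, e3, ← map_add]
  have : (∑ k, ⁅b k, b j⁆ ⊗ₜ[ℂ] b' k) + (∑ k, (b k) ⊗ₜ[ℂ] ⁅b' k, b j⁆)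
      = -(((∑ k, ⁅b j, b k⁆ ⊗ₜ[ℂ] b' k) + (∑ k, (b k) ⊗ₜ[ℂ] ⁅b j, b' k⁆)) : g ⊗[ℂ] g) := by
    rw [neg_add]
    congr 1
    · rw [← Finset.sum_neg_distrib]
      apply Finset.sum_congr rfl
      intro k _
      rw [← TensorProduct.neg_tmul, ← lie_skew]
    · rw [← Finset.sum_neg_distrib]
      apply Finset.sum_congr rfl
      intro k _
      rw [← TensorProduct.tmul_neg, ← lie_skew]
  rw [this, hkey (b j), neg_zero, map_zero]

variable {b b'} in
/-- transfer of the invariance identity: `F2 = -F3`. -/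
lemma F2_eq_neg_F3
    [DecidableEq ι]
    (hkey : ∀ x : g, (∑ k, ⁅x, b k⁆ ⊗ₜ[ℂ] b' k) + (∑ k, (b k) ⊗ₜ[ℂ] ⁅x, b' k⁆)
      = (0 : g ⊗[ℂ] g))
    (a c e : ℕ) : F2 p b b' a c e = - F3 p b b' a c e := by
  rw [eq_neg_iff_add_eq_zero, F2, F3, ← Finset.sum_add_distrib]
  apply Finset.sum_eq_zero
  intro k _
  set Ψ : g ⊗[ℂ] g →ₗ[ℂ] UEnv3 p (g := g) :=
    TensorProduct.map ((TensorProduct.mk ℂ (UEnv p (g := g)) (UEnv p (g := g))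
      (cur p a (b k))) ∘ₗ (curL p c)) (curL p e) with hΨdef
  have hΨ : ∀ (x y : g), Ψ (x ⊗ₜ[ℂ] y)
      = (cur p a (b k) ⊗ₜ[ℂ] cur p c x) ⊗ₜ[ℂ] cur p e y := by
    intro x y
    rw [hΨdef, TensorProduct.map_tmul]
    rfl
  have e2 : ∑ j, (cur p a (b k) ⊗ₜ[ℂ] cur p c (b j)) ⊗ₜ[ℂ] cur p e ⁅b' k, b' j⁆
      = Ψ (∑ j, (b j) ⊗ₜ[ℂ] ⁅b' k, b' j⁆) := by
    rw [map_sum]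
    exact Finset.sum_congr rfl (fun j _ => (hΨ _ _).symm)
  have e3 : ∑ j, (cur p a (b k) ⊗ₜ[ℂ] cur p c ⁅b' k, b j⁆) ⊗ₜ[ℂ] cur p e (b' j)
      = Ψ (∑ j, ⁅b' k, b j⁆ ⊗ₜ[ℂ] b' j) := by
    rw [map_sum]
    exact Finset.sum_congr rfl (fun j _ => (hΨ _ _).symm)
  rw [e2, e3, add_comm, ← map_add, hkey (b' k), map_zero]

end omegas

-- ===== bracket expansion =====

lemma lie_expand {A : Type*} [Ring A] [Algebra ℂ A] (P : Finset ℕ) (f h : ℕ → ℕ → ℂ)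
    (X Y : ℕ → ℕ → A) :
    ⁅-∑ m ∈ P, ∑ l ∈ P, f m l • X m l, -∑ m ∈ P, ∑ l ∈ P, h m l • Y m l⁆
    = ∑ m ∈ P, ∑ l ∈ P, ∑ m' ∈ P, ∑ l' ∈ P, (f m l * h m' l') • ⁅X m l, Y m' l'⁆ := by
  rw [neg_lie, lie_neg, neg_neg, sum_lie']
  apply Finset.sum_congr rfl; intro m _
  rw [sum_lie']
  apply Finset.sum_congr rfl; intro l _
  rw [smul_lie, lie_sum', Finset.smul_sum]
  apply Finset.sum_congr rfl; intro m' _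
  rw [lie_sum', Finset.smul_sum]
  apply Finset.sum_congr rfl; intro l' _
  rw [lie_smul, smul_smul]

section brackets

variable (p : ℕ) {g : Type*} [LieRing g] [LieAlgebra ℂ g]
  {ι : Type*} [Fintype ι] (b b' : ι → g)

lemma lie_om_12_13 (m l m' l' : ℕ) :
    ⁅∑ k, (cur p m (b k) ⊗ₜ[ℂ] cur p l (b' k)) ⊗ₜ[ℂ] (1 : UEnv p (g := g)),
      ∑ j, (cur p m' (b j) ⊗ₜ[ℂ] (1 : UEnv p (g := g))) ⊗ₜ[ℂ] cur p l' (b' j)⁆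
    = F1 p b b' (m + m') l l' := by
  rw [sum_lie' (L := UEnv3 p (g := g)), F1]
  apply Finset.sum_congr rfl; intro k _
  rw [lie_sum' (L := UEnv3 p (g := g))]
  apply Finset.sum_congr rfl; intro j _
  simp only [Ring.lie_def, Algebra.TensorProduct.tmul_mul_tmul, one_mul, mul_one]
  rw [← TensorProduct.sub_tmul, ← TensorProduct.sub_tmul, ← Ring.lie_def, cur_lie]

lemma lie_om_13_23 (m l m' l' : ℕ) :
    ⁅∑ k, (cur p m (b k) ⊗ₜ[ℂ] (1 : UEnv p (g := g))) ⊗ₜ[ℂ] cur p l (b' k),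
      ∑ j, ((1 : UEnv p (g := g)) ⊗ₜ[ℂ] cur p m' (b j)) ⊗ₜ[ℂ] cur p l' (b' j)⁆
    = F2 p b b' m m' (l + l') := by
  rw [sum_lie' (L := UEnv3 p (g := g)), F2]
  apply Finset.sum_congr rfl; intro k _
  rw [lie_sum' (L := UEnv3 p (g := g))]
  apply Finset.sum_congr rfl; intro j _
  simp only [Ring.lie_def, Algebra.TensorProduct.tmul_mul_tmul, one_mul, mul_one]
  rw [← TensorProduct.tmul_sub, ← Ring.lie_def, cur_lie]

lemma lie_om_12_23 (m l m' l' : ℕ) :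
    ⁅∑ k, (cur p m (b k) ⊗ₜ[ℂ] cur p l (b' k)) ⊗ₜ[ℂ] (1 : UEnv p (g := g)),
      ∑ j, ((1 : UEnv p (g := g)) ⊗ₜ[ℂ] cur p m' (b j)) ⊗ₜ[ℂ] cur p l' (b' j)⁆
    = F3 p b b' m (l + m') l' := by
  rw [sum_lie' (L := UEnv3 p (g := g)), F3]
  apply Finset.sum_congr rfl; intro k _
  rw [lie_sum' (L := UEnv3 p (g := g))]
  apply Finset.sum_congr rfl; intro j _
  simp only [Ring.lie_def, Algebra.TensorProduct.tmul_mul_tmul, one_mul, mul_one]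
  rw [← TensorProduct.sub_tmul, ← TensorProduct.tmul_sub, ← Ring.lie_def, cur_lie]

end brackets

-- ===== regrouping double sums along antidiagonals =====

lemma regroup {M : Type*} [AddCommGroup M] (p : ℕ) (H : ℕ → ℕ → ℕ → M)
    (hH : ∀ m m' a, p ≤ a → H m m' a = 0) :
    ∑ m ∈ range p, ∑ m' ∈ range p, H m m' (m + m')
    = ∑ a ∈ range p, ∑ i ∈ range (a + 1), H i (a - i) a := by
  rw [← Finset.sum_product' (f := fun m m' => H m m' (m + m'))]
  have h1 : ∑ q ∈ range p ×ˢ range p, H q.1 q.2 (q.1 + q.2)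
      = ∑ q ∈ (range p ×ˢ range p).filter (fun q => q.1 + q.2 < p),
          H q.1 q.2 (q.1 + q.2) := by
    refine (Finset.sum_subset (Finset.filter_subset _ _) ?_).symm
    intro q hq hnq
    simp only [Finset.mem_filter, hq, true_and, not_lt] at hnq
    exact hH q.1 q.2 _ hnq
  have h2 : (range p ×ˢ range p).filter (fun q => q.1 + q.2 < p)
      = (range p).biUnion (fun a => Finset.HasAntidiagonal.antidiagonal a) := by
    ext ⟨i, j⟩
    simp only [Finset.mem_filter, Finset.mem_product, Finset.mem_range,
      Finset.mem_biUnion, Finset.HasAntidiagonal.mem_antidiagonal]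
    constructor
    · rintro ⟨⟨hi, hj⟩, hij⟩
      exact ⟨i + j, hij, rfl⟩
    · rintro ⟨a, ha, rfl⟩
      exact ⟨⟨by omega, by omega⟩, ha⟩
  have h3 : ((range p : Finset ℕ) : Set ℕ).PairwiseDisjoint
      (fun a => (Finset.HasAntidiagonal.antidiagonal a : Finset (ℕ × ℕ))) := by
    intro a _ a' _ hne
    simp only [Function.onFun]
    rw [Finset.disjoint_left]
    intro q hq hq'
    rw [Finset.HasAntidiagonal.mem_antidiagonal] at hq hq'
    omega
  rw [h1, h2, Finset.sum_biUnion h3]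
  apply Finset.sum_congr rfl
  intro a ha
  have : ∑ q ∈ Finset.HasAntidiagonal.antidiagonal a, H q.1 q.2 (q.1 + q.2)
      = ∑ q ∈ Finset.HasAntidiagonal.antidiagonal a, H q.1 q.2 a := by
    apply Finset.sum_congr rfl
    intro q hq
    rw [Finset.HasAntidiagonal.mem_antidiagonal] at hq
    rw [hq]
  rw [this, Nat.sum_antidiagonal_eq_sum_range_succ_mk (fun q => H q.1 q.2 a) a]

/-- coefficient function, `ℕ` version matching the statement. -/
noncomputable def dn (t : ℂ) (m l : ℕ) : ℂ :=
  (-1 : ℂ) ^ m * ((m + l).choose l : ℂ) * t ^ (-(1 : ℤ) - m - l)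

/-- `ℤ` version, zero for negative indices. -/
noncomputable def Dc (t : ℂ) (m l : ℤ) : ℂ :=
  if 0 ≤ m ∧ 0 ≤ l then dn t m.toNat l.toNat else 0

lemma Dc_coe (t : ℂ) (m l : ℕ) : Dc t m l = dn t m l := by
  simp [Dc]

lemma Dc_neg_left (t : ℂ) (m l : ℤ) (h : m < 0) : Dc t m l = 0 := by
  rw [Dc, if_neg]; omega

lemma Dc_neg_right (t : ℂ) (m l : ℤ) (h : l < 0) : Dc t m l = 0 := by
  rw [Dc, if_neg]; omega

lemma Dc_rec (t : ℂ) (ht : t ≠ 0) (m l : ℤ) :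
    t * Dc t m l = (if m = 0 ∧ l = 0 then 1 else 0) - Dc t (m - 1) l + Dc t m (l - 1) := by
  rcases lt_or_ge m 0 with hm | hm
  · rw [Dc_neg_left t m l hm, Dc_neg_left t (m-1) l (by omega), Dc_neg_left t m (l-1) hm,
      if_neg (by omega)]
    ring
  rcases lt_or_ge l 0 with hl | hl
  · rw [Dc_neg_right t m l hl, Dc_neg_right t (m-1) l hl, Dc_neg_right t m (l-1) (by omega),
      if_neg (by omega)]
    ring
  lift m to ℕ using hm
  lift l to ℕ using hl
  rcases Nat.eq_zero_or_pos m with rfl | hm'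
  · rcases Nat.eq_zero_or_pos l with rfl | hl'
    · rw [Dc_coe, Dc_neg_left t _ _ (by norm_num : ((0:ℕ):ℤ) - 1 < 0),
        Dc_neg_right t _ _ (by norm_num : ((0:ℕ):ℤ) - 1 < 0), if_pos (by norm_num)]
      simp [dn, zpow_neg, mul_inv_cancel₀ ht]
    · obtain ⟨l', rfl⟩ : ∃ l', l = l' + 1 := ⟨l - 1, by omega⟩
      rw [Dc_coe, Dc_neg_left t _ _ (by norm_num : ((0:ℕ):ℤ) - 1 < 0),
        show ((l' + 1 : ℕ) : ℤ) - 1 = ((l' : ℕ) : ℤ) by push_cast; ring, Dc_coe,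
        if_neg (by push_cast; omega)]
      rw [dn, dn]
      simp only [Nat.zero_add, Nat.choose_self, pow_zero, Nat.cast_one]
      push_cast
      rw [show (-1 - ((l':ℤ)+1) : ℤ) = ((-1 - (l':ℤ)) + (-1) : ℤ) by ring]
      rw [zpow_add₀ ht, zpow_neg_one]
      field_simp
      ring
  · obtain ⟨m', rfl⟩ : ∃ m', m = m' + 1 := ⟨m - 1, by omega⟩
    rcases Nat.eq_zero_or_pos l with rfl | hl'
    · rw [Dc_coe, Dc_neg_right t _ _ (by norm_num : ((0:ℕ):ℤ) - 1 < 0),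
        show ((m' + 1 : ℕ) : ℤ) - 1 = ((m' : ℕ) : ℤ) by push_cast; ring, Dc_coe,
        if_neg (by push_cast; omega)]
      rw [dn, dn]
      simp only [Nat.add_zero, Nat.choose_zero_right, Nat.cast_one]
      push_cast
      rw [show -(1:ℤ) - ((m':ℤ)+1) - 0 = (-(1:ℤ) - m' - 0) + (-1) by ring, zpow_add₀ ht,
        pow_succ]
      field_simp
      ring
    · obtain ⟨l', rfl⟩ : ∃ l', l = l' + 1 := ⟨l - 1, by omega⟩
      rw [Dc_coe,
        show ((m' + 1 : ℕ) : ℤ) - 1 = ((m' : ℕ) : ℤ) by push_cast; ring,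
        show ((l' + 1 : ℕ) : ℤ) - 1 = ((l' : ℕ) : ℤ) by push_cast; ring, Dc_coe, Dc_coe,
        if_neg (by push_cast; omega)]
      rw [dn, dn, dn]
      have hps : ((m' + 1 + (l' + 1)).choose (l' + 1) : ℂ)
          = ((m' + (l' + 1)).choose (l' + 1) : ℂ) + ((m' + 1 + l').choose l' : ℂ) := by
        rw [show m' + 1 + (l' + 1) = (m' + l' + 1) + 1 by ring, Nat.choose_succ_succ]
        push_cast
        rw [show m' + l' + 1 = m' + (l' + 1) by ring]
        ring_nf
        rw [Nat.succ_eq_add_one, Nat.add_comm 1 l']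
      rw [hps]
      have he1 : -(1:ℤ) - ((m'+1 : ℕ):ℤ) - ((l'+1 : ℕ):ℤ) = (-(1:ℤ) - (m':ℕ) - ((l'+1:ℕ):ℤ)) + (-1) := by push_cast; ring
      have he2 : -(1:ℤ) - ((m'+1 : ℕ):ℤ) - ((l'+1 : ℕ):ℤ) = (-(1:ℤ) - ((m'+1:ℕ):ℤ) - (l':ℕ)) + (-1) := by push_cast; ring
      rw [show t ^ (-(1:ℤ) - ((m'+1 : ℕ):ℤ) - ((l'+1 : ℕ):ℤ)) = t ^ (-(1:ℤ) - ((m':ℕ):ℤ) - ((l'+1:ℕ):ℤ)) * t ^ (-1 : ℤ) by rw [← zpow_add₀ ht, ← he1]]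
      rw [show (-(1:ℤ) - ((m'+1 : ℕ):ℤ) - ((l' : ℕ):ℤ)) = (-(1:ℤ) - ((m':ℕ):ℤ) - ((l'+1:ℕ):ℤ)) by push_cast; ring]
      rw [zpow_neg_one, pow_succ]
      field_simp
      ring

section claims
variable (s v : ℂ)

noncomputable def S1 (a b c : ℕ) : ℂ :=
  ∑ i ∈ range (a + 1), Dc s i b * Dc (s + v) ((a : ℤ) - i) c

noncomputable def S2 (a b c : ℕ) : ℂ :=
  ∑ l ∈ range (c + 1), Dc (s + v) a l * Dc v b ((c : ℤ) - l)

noncomputable def S3 (a b c : ℕ) : ℂ :=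
  ∑ l ∈ range (b + 1), Dc s a l * Dc v ((b : ℤ) - l) c

variable (hs : s ≠ 0) (hv : v ≠ 0) (hu : s + v ≠ 0)

include hu in
lemma claimA (a b c : ℕ) : (s + v) * S1 s v a b c
    = (if c = 0 then Dc s a b else 0)
      - (if a = 0 then 0 else S1 s v (a - 1) b c)
      + (if c = 0 then 0 else S1 s v a b (c - 1)) := by
  rw [S1, Finset.mul_sum]
  have step : ∀ i ∈ range (a + 1),
      (s + v) * (Dc s i b * Dc (s + v) ((a : ℤ) - i) c)
      = Dc s i b * ((if ((a:ℤ) - i) = 0 ∧ (c:ℤ) = 0 then 1 else 0)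
          - Dc (s+v) ((a:ℤ) - i - 1) c + Dc (s+v) ((a:ℤ) - i) ((c:ℤ) - 1)) := by
    intro i _
    rw [← Dc_rec (s+v) hu]
    ring
  rw [Finset.sum_congr rfl step]
  simp only [mul_sub, mul_add]
  rw [Finset.sum_add_distrib, Finset.sum_sub_distrib]
  congr 1
  · congr 1
    · -- delta part
      rcases Nat.eq_zero_or_pos c with rfl | hc
      · rw [if_pos rfl, Finset.sum_eq_single a]
        · rw [if_pos (by omega), mul_one]
        · intro i hi hne
          simp only [mem_range] at hi
          rw [if_neg (by omega), mul_zero]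
        · intro h; exact absurd (self_mem_range_succ a) h
      · rw [if_neg (by omega)]
        apply Finset.sum_eq_zero
        intro i _
        rw [if_neg (by omega), mul_zero]
    · -- shift in a
      rcases Nat.eq_zero_or_pos a with rfl | ha
      · rw [if_pos rfl]
        apply Finset.sum_eq_zero
        intro i hi
        simp only [mem_range] at hi
        rw [Dc_neg_left (s+v) _ _ (by omega), mul_zero]
      · rw [if_neg (by omega), S1]
        obtain ⟨a', rfl⟩ : ∃ a', a = a' + 1 := ⟨a - 1, by omega⟩
        rw [Finset.sum_range_succ,
          Dc_neg_left (s+v) (((a'+1 : ℕ):ℤ) - (a'+1 : ℕ) - 1) c (by push_cast; omega), mul_zero,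
          add_zero]
        simp only [Nat.add_sub_cancel]
        apply Finset.sum_congr rfl
        intro i hi
        congr 2
        push_cast; ring
  · -- shift in c
    rcases Nat.eq_zero_or_pos c with rfl | hc
    · rw [if_pos rfl]
      apply Finset.sum_eq_zero
      intro i _
      rw [Dc_neg_right (s+v) _ _ (by omega), mul_zero]
    · rw [if_neg (by omega), S1]
      obtain ⟨c', rfl⟩ : ∃ c', c = c' + 1 := ⟨c - 1, by omega⟩
      simp only [Nat.add_sub_cancel]
      apply Finset.sum_congr rfl
      intro i hi
      congr 2
      push_cast; ring

include hu hv in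
lemma claimB (a b c : ℕ) : (s + v) * S2 s v a b c
    = (if a = 0 then Dc v b c else 0)
      - (if a = 0 then 0 else S2 s v (a - 1) b c)
      + (if c = 0 then 0 else S2 s v a b (c - 1)) := by
  rw [S2, Finset.mul_sum]
  have step : ∀ l ∈ range (c + 1),
      (s + v) * (Dc (s+v) a l * Dc v b ((c : ℤ) - l))
      = ((if (a:ℤ) = 0 ∧ (l:ℤ) = 0 then 1 else 0)
          - Dc (s+v) ((a:ℤ) - 1) l + Dc (s+v) a ((l:ℤ) - 1)) * Dc v b ((c:ℤ) - l) := by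
    intro l _
    rw [← Dc_rec (s+v) hu]
    ring
  rw [Finset.sum_congr rfl step]
  simp only [sub_mul, add_mul]
  rw [Finset.sum_add_distrib, Finset.sum_sub_distrib]
  congr 1
  · congr 1
    · -- delta part
      rcases Nat.eq_zero_or_pos a with rfl | ha
      · rw [if_pos rfl, Finset.sum_eq_single 0]
        · rw [if_pos (by omega), one_mul]
          norm_num
        · intro l hl hne
          rw [if_neg (by omega), zero_mul]
        · intro h; exact absurd (mem_range.2 (by omega)) h
      · rw [if_neg (by omega)]
        apply Finset.sum_eq_zero
        intro l _
        rw [if_neg (by omega), zero_mul]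
    · -- shift in a
      rcases Nat.eq_zero_or_pos a with rfl | ha
      · rw [if_pos rfl]
        apply Finset.sum_eq_zero
        intro l _
        rw [Dc_neg_left (s+v) _ _ (by omega), zero_mul]
      · rw [if_neg (by omega), S2]
        apply Finset.sum_congr rfl
        intro l _
        congr 2
        push_cast; omega
  · -- shift in c
    rcases Nat.eq_zero_or_pos c with rfl | hc
    · rw [if_pos rfl]
      rw [Finset.sum_range_succ, Finset.range_zero, Finset.sum_empty, zero_add]
      rw [Dc_neg_right (s+v) _ _ (by omega), zero_mul]
    · rw [if_neg (by omega), S2]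
      obtain ⟨c', rfl⟩ : ∃ c', c = c' + 1 := ⟨c - 1, by omega⟩
      simp only [Nat.add_sub_cancel]
      rw [Finset.sum_range_succ']
      rw [Dc_neg_right (s+v) _ _ (by omega), zero_mul, add_zero]
      apply Finset.sum_congr rfl
      intro l _
      have h1 : ((l:ℤ) + 1 - 1) = (l:ℤ) := by ring
      rw [show (((l+1 : ℕ)):ℤ) - 1 = (l:ℤ) by push_cast; ring]
      congr 2
      push_cast; ring

include hs hv in
lemma claimC (a b c : ℕ) : (s + v) * S3 s v a b c
    = (if a = 0 then Dc v b c else 0) + (if c = 0 then Dc s a b else 0)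
      - (if a = 0 then 0 else S3 s v (a - 1) b c)
      + (if c = 0 then 0 else S3 s v a b (c - 1)) := by
  rw [S3, Finset.mul_sum]
  have step : ∀ l ∈ range (b + 1),
      (s + v) * (Dc s a l * Dc v ((b : ℤ) - l) c)
      = ((if (a:ℤ) = 0 ∧ (l:ℤ) = 0 then 1 else 0)
          - Dc s ((a:ℤ) - 1) l + Dc s a ((l:ℤ) - 1)) * Dc v ((b:ℤ) - l) c
        + Dc s a l * ((if ((b:ℤ) - l) = 0 ∧ (c:ℤ) = 0 then 1 else 0)
          - Dc v ((b:ℤ) - l - 1) c + Dc v ((b:ℤ) - l) ((c:ℤ) - 1)) := by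
    intro l _
    rw [← Dc_rec s hs, ← Dc_rec v hv]
    ring
  rw [Finset.sum_congr rfl step]
  simp only [sub_mul, add_mul, mul_sub, mul_add]
  rw [Finset.sum_add_distrib]
  rw [Finset.sum_add_distrib, Finset.sum_sub_distrib, Finset.sum_add_distrib,
    Finset.sum_sub_distrib]
  have hW : ∑ l ∈ range (b+1), Dc s a ((l:ℤ) - 1) * Dc v ((b:ℤ) - l) c
      = ∑ l ∈ range (b+1), Dc s a l * Dc v ((b:ℤ) - l - 1) c := by
    rw [Finset.sum_range_succ', Finset.sum_range_succ]
    rw [Dc_neg_right s _ _ (by omega), zero_mul, add_zero,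
      Dc_neg_left v (((b:ℕ):ℤ) - b - 1) c (by omega), mul_zero, add_zero]
    apply Finset.sum_congr rfl
    intro l _
    congr 2
    · push_cast; ring
    · push_cast; ring
  have e1 : ∑ l ∈ range (b+1),
      (if (a:ℤ) = 0 ∧ (l:ℤ) = 0 then 1 else 0) * Dc v ((b:ℤ) - l) c
      = (if a = 0 then Dc v b c else 0) := by
    rcases Nat.eq_zero_or_pos a with rfl | ha
    · rw [if_pos rfl, Finset.sum_eq_single 0]
      · rw [if_pos (by omega), one_mul]
        norm_num
      · intro l hl hne
        rw [if_neg (by omega), zero_mul]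
      · intro h; exact absurd (mem_range.2 (by omega)) h
    · rw [if_neg (by omega)]
      apply Finset.sum_eq_zero
      intro l _
      rw [if_neg (by omega), zero_mul]
  have e2 : ∑ l ∈ range (b+1),
      Dc s a l * (if ((b:ℤ) - l) = 0 ∧ (c:ℤ) = 0 then 1 else 0)
      = (if c = 0 then Dc s a b else 0) := by
    rcases Nat.eq_zero_or_pos c with rfl | hc
    · rw [if_pos rfl, Finset.sum_eq_single b]
      · rw [if_pos (by omega), mul_one]
      · intro l hl hne
        simp only [mem_range] at hl
        rw [if_neg (by omega), mul_zero]
      · intro h; exact absurd (self_mem_range_succ b) h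
    · rw [if_neg (by omega)]
      apply Finset.sum_eq_zero
      intro l _
      rw [if_neg (by omega), mul_zero]
  have e3 : ∑ l ∈ range (b+1), Dc s ((a:ℤ) - 1) l * Dc v ((b:ℤ) - l) c
      = (if a = 0 then 0 else S3 s v (a - 1) b c) := by
    rcases Nat.eq_zero_or_pos a with rfl | ha
    · rw [if_pos rfl]
      apply Finset.sum_eq_zero
      intro l _
      rw [Dc_neg_left s _ _ (by omega), zero_mul]
    · rw [if_neg (by omega), S3]
      apply Finset.sum_congr rfl
      intro l _
      congr 2
      push_cast; omega
  have e4 : ∑ l ∈ range (b+1), Dc s a l * Dc v ((b:ℤ) - l) ((c:ℤ) - 1)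
      = (if c = 0 then 0 else S3 s v a b (c - 1)) := by
    rcases Nat.eq_zero_or_pos c with rfl | hc
    · rw [if_pos rfl]
      apply Finset.sum_eq_zero
      intro l _
      rw [Dc_neg_right v _ _ (by omega), mul_zero]
    · rw [if_neg (by omega), S3]
      obtain ⟨c', rfl⟩ : ∃ c', c = c' + 1 := ⟨c - 1, by omega⟩
      simp only [Nat.add_sub_cancel]
      apply Finset.sum_congr rfl
      intro l _
      congr 2
      push_cast; ring
  rw [e1, e2, e3, e4, hW]
  ring

include hs hv hu in
lemma keylem (a b c : ℕ) :
    (s + v) * (S1 s v a b c + S2 s v a b c - S3 s v a b c)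
    = -(if a = 0 then 0 else S1 s v (a-1) b c + S2 s v (a-1) b c - S3 s v (a-1) b c)
      + (if c = 0 then 0 else S1 s v a b (c-1) + S2 s v a b (c-1) - S3 s v a b (c-1)) := by
  have hA := claimA s v hu a b c
  have hB := claimB s v hv hu a b c
  have hC := claimC s v hs hv a b c
  by_cases ha : a = 0
  · by_cases hc : c = 0
    · simp only [ha, hc, eq_self_iff_true, if_true] at hA hB hC ⊢
      rw [mul_sub, mul_add, hA, hB, hC]; ring
    · simp only [ha, eq_self_iff_true, if_true, if_neg hc] at hA hB hC ⊢
      rw [mul_sub, mul_add, hA, hB, hC]; ring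
  · by_cases hc : c = 0
    · simp only [hc, eq_self_iff_true, if_true, if_neg ha] at hA hB hC ⊢
      rw [mul_sub, mul_add, hA, hB, hC]; ring
    · simp only [if_neg ha, if_neg hc] at hA hB hC ⊢
      rw [mul_sub, mul_add, hA, hB, hC]; ring

include hs hv hu in
lemma Tzero (a b c : ℕ) : S1 s v a b c + S2 s v a b c - S3 s v a b c = 0 := by
  suffices h : ∀ n a b c, a + c ≤ n →
      S1 s v a b c + S2 s v a b c - S3 s v a b c = 0 by
    exact h (a+c) a b c le_rfl
  intro n
  induction n with
  | zero =>
    intro a b c h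
    obtain rfl : a = 0 := by omega
    obtain rfl : c = 0 := by omega
    have key := keylem s v hs hv hu 0 b 0
    simp only [eq_self_iff_true, if_true, neg_zero, add_zero] at key
    exact (mul_eq_zero.1 key).resolve_left hu
  | succ n ih =>
    intro a b c h
    have key := keylem s v hs hv hu a b c
    have z1 : (if a = 0 then 0 else S1 s v (a-1) b c + S2 s v (a-1) b c - S3 s v (a-1) b c)
        = 0 := by
      split
      · rfl
      · exact ih (a-1) b c (by omega)
    have z2 : (if c = 0 then 0 else S1 s v a b (c-1) + S2 s v a b (c-1) - S3 s v a b (c-1))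
        = 0 := by
      split
      · rfl
      · exact ih a b (c-1) (by omega)
    rw [z1, z2] at key
    simp only [neg_zero, add_zero] at key
    exact (mul_eq_zero.1 key).resolve_left hu

end claims

lemma scalar_id (s v : ℂ) (hs : s ≠ 0) (hv : v ≠ 0) (hu : s + v ≠ 0) (a b c : ℕ) :
    -(∑ i ∈ range (a+1), dn s i b * dn (s+v) (a-i) c)
    - (∑ l ∈ range (c+1), dn (s+v) a l * dn v b (c-l))
    + (∑ l ∈ range (b+1), dn s a l * dn v (b-l) c) = 0 := by
  have h1 : S1 s v a b c = ∑ i ∈ range (a+1), dn s i b * dn (s+v) (a-i) c := by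
    apply Finset.sum_congr rfl
    intro i hi
    simp only [mem_range] at hi
    rw [show ((a:ℤ) - i) = ((a - i : ℕ) : ℤ) by push_cast [Nat.cast_sub (by omega : i ≤ a)]; ring,
      Dc_coe, Dc_coe]
  have h2 : S2 s v a b c = ∑ l ∈ range (c+1), dn (s+v) a l * dn v b (c-l) := by
    apply Finset.sum_congr rfl
    intro l hl
    simp only [mem_range] at hl
    rw [show ((c:ℤ) - l) = ((c - l : ℕ) : ℤ) by push_cast [Nat.cast_sub (by omega : l ≤ c)]; ring,
      Dc_coe, Dc_coe]
  have h3 : S3 s v a b c = ∑ l ∈ range (b+1), dn s a l * dn v (b-l) c := by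
    apply Finset.sum_congr rfl
    intro l hl
    simp only [mem_range] at hl
    rw [show ((b:ℤ) - l) = ((b - l : ℕ) : ℤ) by push_cast [Nat.cast_sub (by omega : l ≤ b)]; ring,
      Dc_coe, Dc_coe]
  have := Tzero s v hs hv hu a b c
  rw [h1, h2, h3] at this
  linear_combination -this

lemma lie_expand3 (p : ℕ) {g : Type*} [LieRing g] [LieAlgebra ℂ g]
    (f h : ℕ → ℕ → ℂ) (X Y : ℕ → ℕ → UEnv3 p (g := g)) :
    ⁅-∑ m ∈ range p, ∑ l ∈ range p, f m l • X m l,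
      -∑ m ∈ range p, ∑ l ∈ range p, h m l • Y m l⁆
    = ∑ m ∈ range p, ∑ l ∈ range p, ∑ m' ∈ range p, ∑ l' ∈ range p,
        (f m l * h m' l') • ⁅X m l, Y m' l'⁆ :=
  lie_expand (A := UEnv3 p (g := g)) (range p) f h X Y

end portinst

/-- The rational `r`-matrix `r_p(t) = -∑_{m,l=0}^{p-1} Ω_{ml} (-1)^m binom(m+l,l) t^{-1-m-l}`
satisfies the classical Yang–Baxter equation in `U(g_p)^{⊗3}`:
`[r₁₂(t₁-t₂), r₁₃(t₁-t₃)] + [r₁₃(t₁-t₃), r₂₃(t₂-t₃)] + [r₁₂(t₁-t₂), r₂₃(t₂-t₃)] = 0`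
for pairwise distinct `t₁, t₂, t₃ ∈ ℂ`.  Here `g` is a finite-dimensional simple complex
Lie algebra with nondegenerate invariant symmetric form `B`, and `(Xₖ), (Xᵏ)` are
`B`-dual bases; brackets are commutators in the ring `U(g_p)^{⊗3}`. -/
theorem rMatrix_classical_yang_baxter
    {g : Type*} [LieRing g] [LieAlgebra ℂ g] [Module.Finite ℂ g]
    [LieAlgebra.IsSimple ℂ g]
    (B : LinearMap.BilinForm ℂ g) (hBnd : B.Nondegenerate)
    (hBsymm : ∀ x y : g, B x y = B y x)
    (hBinv : ∀ x y z : g, B ⁅x, y⁆ z = B x ⁅y, z⁆)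
    {ι : Type*} [Fintype ι] [DecidableEq ι] (b : Module.Basis ι ℂ g) (b' : ι → g)
    (hdual : ∀ i j, B (b i) (b' j) = if i = j then 1 else 0)
    (p : ℕ) (hp : 1 ≤ p) (t₁ t₂ t₃ : ℂ)
    (h12 : t₁ ≠ t₂) (h13 : t₁ ≠ t₃) (h23 : t₂ ≠ t₃) :
    ⁅r12 p (⇑b) b' (t₁ - t₂), r13 p (⇑b) b' (t₁ - t₃)⁆
      + ⁅r13 p (⇑b) b' (t₁ - t₃), r23 p (⇑b) b' (t₂ - t₃)⁆
      + ⁅r12 p (⇑b) b' (t₁ - t₂), r23 p (⇑b) b' (t₂ - t₃)⁆ = 0 := by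
  have hu' : t₁ - t₃ = (t₁ - t₂) + (t₂ - t₃) := by ring
  rw [hu']
  set s := t₁ - t₂ with hsdef
  set v := t₂ - t₃ with hvdef
  have hs0 : s ≠ 0 := sub_ne_zero.2 h12
  have hv0 : v ≠ 0 := sub_ne_zero.2 h23
  have hu0 : s + v ≠ 0 := by rw [← hu']; exact sub_ne_zero.2 h13
  have hkey := key_invariance B b b' hBnd hBsymm hBinv hdual
  have er12 : r12 p (⇑b) b' s = -∑ m ∈ range p, ∑ l ∈ range p,
      dn s m l • (∑ k, (cur p m (b k) ⊗ₜ[ℂ] cur p l (b' k)) ⊗ₜ[ℂ] (1 : UEnv p (g := g))) := rfl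
  have er13 : r13 p (⇑b) b' (s + v) = -∑ m ∈ range p, ∑ l ∈ range p,
      dn (s + v) m l • (∑ k, (cur p m (b k) ⊗ₜ[ℂ] (1 : UEnv p (g := g))) ⊗ₜ[ℂ] cur p l (b' k)) := rfl
  have er23 : r23 p (⇑b) b' v = -∑ m ∈ range p, ∑ l ∈ range p,
      dn v m l • (∑ k, ((1 : UEnv p (g := g)) ⊗ₜ[ℂ] cur p m (b k)) ⊗ₜ[ℂ] cur p l (b' k)) := rfl
  rw [er12, er13, er23, lie_expand3 p, lie_expand3 p, lie_expand3 p]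
  simp only [lie_om_12_13 p (⇑b) b', lie_om_13_23 p (⇑b) b', lie_om_12_23 p (⇑b) b',
    F1_eq_neg_F3 p hkey, F2_eq_neg_F3 p hkey, smul_neg]
  have hT1 : (∑ m ∈ range p, ∑ l ∈ range p, ∑ m' ∈ range p, ∑ l' ∈ range p,
      -((dn s m l * dn (s+v) m' l') • F3 p (⇑b) b' (m + m') l l'))
      = ∑ a ∈ range p, ∑ bb ∈ range p, ∑ c ∈ range p,
          (-(∑ i ∈ range (a+1), dn s i bb * dn (s+v) (a-i) c)) • F3 p (⇑b) b' a bb c := by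
    rw [Finset.sum_congr rfl (fun m (_ : m ∈ range p) =>
      (Finset.sum_comm (f := fun l m' => ∑ l' ∈ range p,
        -((dn s m l * dn (s+v) m' l') • F3 p (⇑b) b' (m + m') l l'))))]
    rw [regroup p (fun m m' a => ∑ l ∈ range p, ∑ l' ∈ range p,
        -((dn s m l * dn (s+v) m' l') • F3 p (⇑b) b' a l l'))
      (fun m m' a hpa => by
        apply Finset.sum_eq_zero; intro l _
        apply Finset.sum_eq_zero; intro l' _
        rw [F3_zero1 p (⇑b) b' a l l' hpa, smul_zero, neg_zero])]
    apply Finset.sum_congr rfl; intro a _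
    rw [Finset.sum_comm]
    apply Finset.sum_congr rfl; intro bb _
    rw [Finset.sum_comm]
    apply Finset.sum_congr rfl; intro c _
    rw [Finset.sum_neg_distrib, ← Finset.sum_smul]
    exact (neg_smul _ _).symm
  have hT2 : (∑ m ∈ range p, ∑ l ∈ range p, ∑ m' ∈ range p, ∑ l' ∈ range p,
      -((dn (s+v) m l * dn v m' l') • F3 p (⇑b) b' m m' (l + l')))
      = ∑ a ∈ range p, ∑ bb ∈ range p, ∑ c ∈ range p,
          (-(∑ i ∈ range (c+1), dn (s+v) a i * dn v bb (c-i))) • F3 p (⇑b) b' a bb c := by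
    apply Finset.sum_congr rfl; intro a _
    rw [Finset.sum_comm]
    apply Finset.sum_congr rfl; intro bb _
    rw [regroup p (fun l l' c => -((dn (s+v) a l * dn v bb l') • F3 p (⇑b) b' a bb c))
      (fun l l' c hpc => by simp only [F3_zero3 p (⇑b) b' a bb c hpc, smul_zero, neg_zero])]
    apply Finset.sum_congr rfl; intro c _
    rw [Finset.sum_neg_distrib, ← Finset.sum_smul]
    exact (neg_smul _ _).symm
  have hT3 : (∑ m ∈ range p, ∑ l ∈ range p, ∑ m' ∈ range p, ∑ l' ∈ range p,
      ((dn s m l * dn v m' l') • F3 p (⇑b) b' m (l + m') l'))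
      = ∑ a ∈ range p, ∑ bb ∈ range p, ∑ c ∈ range p,
          (∑ i ∈ range (bb+1), dn s a i * dn v (bb-i) c) • F3 p (⇑b) b' a bb c := by
    apply Finset.sum_congr rfl; intro a _
    rw [Finset.sum_congr rfl (fun l (_ : l ∈ range p) =>
      (Finset.sum_comm (f := fun m' l' =>
        (dn s a l * dn v m' l') • F3 p (⇑b) b' a (l + m') l')))]
    rw [Finset.sum_comm]
    rw [Finset.sum_congr rfl (fun c (_ : c ∈ range p) =>
      regroup p (fun i j bb => (dn s a i * dn v j c) • F3 p (⇑b) b' a bb c)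
        (fun i j bb hpb => by simp only [F3_zero2 p (⇑b) b' a bb c hpb, smul_zero]))]
    rw [Finset.sum_comm]
    apply Finset.sum_congr rfl; intro bb _
    apply Finset.sum_congr rfl; intro c _
    rw [← Finset.sum_smul]
  rw [hT1, hT2, hT3, ← Finset.sum_add_distrib, ← Finset.sum_add_distrib]
  apply Finset.sum_eq_zero; intro a _
  rw [← Finset.sum_add_distrib, ← Finset.sum_add_distrib]
  apply Finset.sum_eq_zero; intro bb _
  rw [← Finset.sum_add_distrib, ← Finset.sum_add_distrib]
  apply Finset.sum_eq_zero; intro c _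
  rw [← add_smul, ← add_smul]
  have hid := scalar_id s v hs0 hv0 hu0 a bb c
  rw [sub_eq_add_neg, neg_add_eq_sub] at hid
  rw [show (-(∑ i ∈ range (a+1), dn s i bb * dn (s+v) (a-i) c)
      + -(∑ i ∈ range (c+1), dn (s+v) a i * dn v bb (c-i))
      + (∑ i ∈ range (bb+1), dn s a i * dn v (bb-i) c)) = 0 from by linear_combination hid,
    zero_smul]
end

section
/- In the completed enveloping algebra of the affine Lie algebra of g at noncritical level κ ≠ -h^∨, the Sugawara operator L_{-1} = (1/(2(κ+h^∨))) ∑_{j ∈ ℤ} ∑_k :X_k z^{-j} X^k z^{j-1}: satisfies [L_{-1}, X z^m] = -m X z^{m-1} for all X ∈ g and m ∈ ℤ. -/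
open Finset

/-- A smooth representation of the affine Lie algebra `ĝ = g((z)) ⊕ ℂK` of level `κ`,
recorded through the action operators of the elements `X z^n`: the bracket is
`[X z^m, Y z^n] = [X,Y] z^{m+n} + m δ_{m+n,0} (X|Y) K`, the central element `K` acts by
the scalar `κ`, and every vector is annihilated by `z^N g[[z]]` for `N ≫ 0`. -/
structure AffineRepresentation (g : Type*) [LieRing g] [LieAlgebra ℂ g]
    (B : LinearMap.BilinForm ℂ g) (κ : ℂ)
    (M : Type*) [AddCommGroup M] [Module ℂ M] where
  /-- The action of `X z^n`. -/
  act : g →ₗ[ℂ] ℤ → Module.End ℂ M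
  /-- The affine commutation relations, with the central element acting as `κ`. -/
  comm : ∀ (X Y : g) (m n : ℤ) (v : M),
    act X m (act Y n v) - act Y n (act X m v)
      = act ⁅X, Y⁆ (m + n) v + (if m + n = 0 then (m : ℂ) * B X Y * κ else 0) • v
  /-- Smoothness: every vector is annihilated by `z^N g[[z]]` for `N ≫ 0`. -/
  smooth : ∀ (v : M) (X : g), ∃ N : ℕ, ∀ n : ℤ, (N : ℤ) ≤ n → act X n v = 0

variable {g : Type*} [LieRing g] [LieAlgebra ℂ g]
  {B : LinearMap.BilinForm ℂ g} {κ : ℂ}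
  {M : Type*} [AddCommGroup M] [Module ℂ M]

/-- The action of the Sugawara operator
`L₋₁ = (2(κ+h^∨))⁻¹ ∑_{j ∈ ℤ} ∑ₖ :Xₖ z^{-j} Xᵏ z^{j-1}:` on a smooth module, where the
normal ordering places the operators attached to nonnegative powers of `z` to the right;
on each vector only finitely many summands are nonzero. -/
noncomputable def sugawaraLneg1 (ρ : AffineRepresentation g B κ M)
    {ι : Type*} [Fintype ι] (b b' : ι → g) (h : ℂ) (v : M) : M :=
  (2 * (κ + h))⁻¹ •
    ∑ᶠ j : ℤ, ∑ k, (if 1 ≤ j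
      then ρ.act (b k) (-j) (ρ.act (b' k) (j - 1) v)
      else ρ.act (b' k) (j - 1) (ρ.act (b k) (-j) v))

/-! ### Auxiliary summation lemmas -/

private lemma sum_Ioc_consec {α : Type*} [AddCommGroup α] (W : ℤ → α) {a b c : ℤ}
    (hab : a ≤ b) (hbc : b ≤ c) :
    ∑ j ∈ Ioc a b, W j + ∑ j ∈ Ioc b c, W j = ∑ j ∈ Ioc a c, W j := by
  have hd : Disjoint (Ioc a b) (Ioc b c) := by
    rw [Finset.disjoint_left]
    intro x hx hx'
    rw [mem_Ioc] at hx hx'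
    omega
  rw [← Finset.Ioc_union_Ioc_eq_Ioc hab hbc, Finset.sum_union hd]

private lemma sum_Ioc_shift {α : Type*} [AddCommMonoid α] (W : ℤ → α) (a b m : ℤ) :
    ∑ j ∈ Ioc a b, W (j + m) = ∑ j ∈ Ioc (a + m) (b + m), W j := by
  rw [← Finset.map_add_right_Ioc, Finset.sum_map]
  simp [addRightEmbedding_apply]

private lemma tele_top {α : Type*} [AddCommGroup α] (W : ℤ → α) (K a R m : ℤ)
    (hv : ∀ j, K < j → W j = 0)
    (h1 : a ≤ K) (h2 : a + m ≤ K) (h3 : K ≤ R) (h4 : K ≤ R + m) :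
    ∑ j ∈ Ioc a R, (W (j + m) - W j)
      = ∑ j ∈ Ioc (a + m) a, W j - ∑ j ∈ Ioc a (a + m), W j := by
  rw [Finset.sum_sub_distrib, sum_Ioc_shift]
  have cut : ∀ x y : ℤ, x ≤ K → K ≤ y → ∑ j ∈ Ioc x y, W j = ∑ j ∈ Ioc x K, W j := by
    intro x y hx hy
    rw [← sum_Ioc_consec W hx hy,
      show ∑ j ∈ Ioc K y, W j = 0 from Finset.sum_eq_zero fun j hj => hv j (mem_Ioc.mp hj).1,
      add_zero]
  rw [cut (a + m) (R + m) h2 h4, cut a R h1 h3]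
  rcases le_total m 0 with hm | hm
  · rw [show Ioc a (a + m) = ∅ from Finset.Ioc_eq_empty (by omega), Finset.sum_empty, sub_zero,
      ← sum_Ioc_consec W (show a + m ≤ a by omega) h1]
    abel
  · rw [show Ioc (a + m) a = ∅ from Finset.Ioc_eq_empty (by omega), Finset.sum_empty, zero_sub,
      ← sum_Ioc_consec W (show a ≤ a + m by omega) h2]
    abel

private lemma tele_bot {α : Type*} [AddCommGroup α] (W : ℤ → α) (K a b m : ℤ)
    (hv : ∀ j, j ≤ K → W j = 0)
    (h1 : a ≤ K) (h2 : a + m ≤ K) (h3 : K ≤ b) (h4 : K ≤ b + m) :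
    ∑ j ∈ Ioc a b, (W (j + m) - W j)
      = ∑ j ∈ Ioc b (b + m), W j - ∑ j ∈ Ioc (b + m) b, W j := by
  rw [Finset.sum_sub_distrib, sum_Ioc_shift]
  have cut : ∀ x y : ℤ, x ≤ K → K ≤ y → ∑ j ∈ Ioc x y, W j = ∑ j ∈ Ioc K y, W j := by
    intro x y hx hy
    rw [← sum_Ioc_consec W hx hy,
      show ∑ j ∈ Ioc x K, W j = 0 from Finset.sum_eq_zero fun j hj => hv j (mem_Ioc.mp hj).2,
      zero_add]
  rw [cut (a + m) (b + m) h2 h4, cut a b h1 h3]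
  rcases le_total m 0 with hm | hm
  · rw [show Ioc b (b + m) = ∅ from Finset.Ioc_eq_empty (by omega), Finset.sum_empty, zero_sub,
      ← sum_Ioc_consec W h4 (show b + m ≤ b by omega)]
    abel
  · rw [show Ioc (b + m) b = ∅ from Finset.Ioc_eq_empty (by omega), Finset.sum_empty, sub_zero,
      ← sum_Ioc_consec W h3 (show b ≤ b + m by omega)]
    abel

/-! ### Dual bases and Casimir invariance -/

section Dual

variable {ι : Type*} [Fintype ι] [DecidableEq ι]

private lemma dual_left (b : Module.Basis ι ℂ g) (b' : ι → g)
    (hdual : ∀ i j, B (b i) (b' j) = if i = j then 1 else 0) (Y : g) :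
    ∑ k, B Y (b' k) • b k = Y := by
  have hrepr : ∀ k, B Y (b' k) = b.repr Y k := by
    intro k
    conv_lhs => rw [← Module.Basis.sum_repr b Y]
    rw [map_sum, LinearMap.sum_apply]
    simp only [map_smul, LinearMap.smul_apply, hdual, smul_eq_mul, mul_ite, mul_one, mul_zero]
    rw [Finset.sum_ite_eq' Finset.univ k (fun j => b.repr Y j)]
    simp
  simp only [hrepr]
  exact Module.Basis.sum_repr b Y

private lemma dual_right (hBnd : B.Nondegenerate) (hBsymm : ∀ x y : g, B x y = B y x)
    (b : Module.Basis ι ℂ g) (b' : ι → g)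
    (hdual : ∀ i j, B (b i) (b' j) = if i = j then 1 else 0) (Y : g) :
    ∑ k, B (b k) Y • b' k = Y := by
  have key : ∀ Z : g, (∀ i, B (b i) Z = 0) → Z = 0 := by
    intro Z hZ
    have hflip : B.flip Z = 0 := by
      apply Module.Basis.ext b
      intro i
      simpa [LinearMap.flip_apply] using hZ i
    apply hBnd.1
    intro x
    rw [hBsymm]
    have h0 : (B.flip Z) x = 0 := by rw [hflip]; rfl
    exact h0
  have hz : ∀ i, B (b i) (∑ k, B (b k) Y • b' k - Y) = 0 := by
    intro i
    rw [map_sub, map_sum]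
    simp only [map_smul, smul_eq_mul, hdual, mul_ite, mul_one, mul_zero]
    rw [Finset.sum_ite_eq Finset.univ i (fun k => B (b k) Y)]
    simp
  exact sub_eq_zero.mp (key _ hz)

private lemma casimir_swap {M : Type*} [AddCommGroup M] [Module ℂ M]
    (hBnd : B.Nondegenerate) (hBsymm : ∀ x y : g, B x y = B y x)
    (hBinv : ∀ x y z : g, B ⁅x, y⁆ z = B x ⁅y, z⁆)
    (b : Module.Basis ι ℂ g) (b' : ι → g)
    (hdual : ∀ i j, B (b i) (b' j) = if i = j then 1 else 0)
    (F : g →ₗ[ℂ] g →ₗ[ℂ] M) (X : g) :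
    ∑ k, F ⁅b k, X⁆ (b' k) = - ∑ k, F (b k) ⁅b' k, X⁆ := by
  have e1 : ∀ k, F ⁅b k, X⁆ (b' k) = ∑ j, B ⁅b k, X⁆ (b' j) • F (b j) (b' k) := by
    intro k
    conv_lhs => rw [← dual_left b b' hdual ⁅b k, X⁆]
    rw [map_sum, LinearMap.sum_apply]
    refine Finset.sum_congr rfl fun j _ => ?_
    rw [map_smul, LinearMap.smul_apply]
  have e2 : ∀ k, F (b k) ⁅b' k, X⁆ = ∑ j, B (b j) ⁅b' k, X⁆ • F (b k) (b' j) := by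
    intro k
    conv_lhs => rw [← dual_right hBnd hBsymm b b' hdual ⁅b' k, X⁆]
    rw [map_sum]
    refine Finset.sum_congr rfl fun j _ => ?_
    rw [map_smul]
  simp only [e1, e2]
  have main : (∑ k, ∑ j, (B ⁅b k, X⁆ (b' j)) • F (b j) (b' k))
      + ∑ k, ∑ j, (B (b j) ⁅b' k, X⁆) • F (b k) (b' j) = 0 := by
    rw [Finset.sum_comm (s := (Finset.univ : Finset ι)) (t := Finset.univ)
      (f := fun k j => (B (b j) ⁅b' k, X⁆) • F (b k) (b' j)),
      ← Finset.sum_add_distrib]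
    refine Finset.sum_eq_zero fun k _ => ?_
    rw [← Finset.sum_add_distrib]
    refine Finset.sum_eq_zero fun j _ => ?_
    have hc : B ⁅b k, X⁆ (b' j) = -(B (b k) ⁅b' j, X⁆) := by
      rw [hBinv, ← lie_skew, map_neg]
    rw [hc, ← add_smul, neg_add_cancel, zero_smul]
  exact eq_neg_of_add_eq_zero_left main

end Dual

/-! ### Representation helpers -/

namespace AffineRepresentation

variable (ρ : AffineRepresentation g B κ M)

private lemma act_g_sum {ι' : Type*} (t : Finset ι') (f : ι' → g) (n : ℤ) (w : M) :
    ρ.act (∑ k ∈ t, f k) n w = ∑ k ∈ t, ρ.act (f k) n w := by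
  rw [map_sum, Finset.sum_apply, LinearMap.sum_apply]

private lemma act_g_smul (c : ℂ) (Y : g) (n : ℤ) (w : M) :
    ρ.act (c • Y) n w = c • ρ.act Y n w := by
  rw [map_smul, Pi.smul_apply, LinearMap.smul_apply]

private lemma act_comb {ι' : Type*} (t : Finset ι') (f : ι' → g) (c : ι' → ℂ)
    (n : ℤ) (w : M) :
    ∑ k ∈ t, c k • ρ.act (f k) n w = ρ.act (∑ k ∈ t, c k • f k) n w := by
  rw [ρ.act_g_sum]
  exact Finset.sum_congr rfl fun k _ => (ρ.act_g_smul _ _ _ _).symm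

private noncomputable def actF (p q : ℤ) (w : M) : g →ₗ[ℂ] g →ₗ[ℂ] M :=
  LinearMap.mk₂ ℂ (fun Y Z => ρ.act Y p (ρ.act Z q w))
    (fun Y Y' Z => by simp [map_add])
    (fun c Y Z => by simp [map_smul])
    (fun Y Z Z' => by simp [map_add])
    (fun c Y Z => by simp [map_smul])

private lemma actF_apply (p q : ℤ) (w : M) (Y Z : g) :
    ρ.actF p q w Y Z = ρ.act Y p (ρ.act Z q w) := rfl

private lemma comm2 (A C X : g) (p q m : ℤ) (w : M) :
    ρ.act A p (ρ.act C q (ρ.act X m w)) - ρ.act X m (ρ.act A p (ρ.act C q w))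
      = ρ.act A p (ρ.act ⁅C, X⁆ (q + m) w)
        + ρ.act ⁅A, X⁆ (p + m) (ρ.act C q w)
        + (if q + m = 0 then (q : ℂ) * B C X * κ else 0) • ρ.act A p w
        + (if p + m = 0 then (p : ℂ) * B A X * κ else 0) • ρ.act C q w := by
  have h1 := ρ.comm C X q m w
  have h2 := ρ.comm A X p m (ρ.act C q w)
  have h1' := congrArg (ρ.act A p) h1
  rw [map_sub, map_add, map_smul] at h1'
  have e : ρ.act A p (ρ.act C q (ρ.act X m w)) - ρ.act X m (ρ.act A p (ρ.act C q w))
      = (ρ.act A p (ρ.act C q (ρ.act X m w)) - ρ.act A p (ρ.act X m (ρ.act C q w)))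
        + (ρ.act A p (ρ.act X m (ρ.act C q w)) - ρ.act X m (ρ.act A p (ρ.act C q w))) := by
    abel
  rw [e, h1', h2]
  abel

end AffineRepresentation

/-- In (the completed enveloping algebra of) the affine Lie algebra of a simple complex
Lie algebra `g` at noncritical level `κ ≠ -h^∨`, the Sugawara operator `L₋₁` satisfies
`[L₋₁, X z^m] = -m X z^{m-1}` for all `X ∈ g`, `m ∈ ℤ` — here stated as acting on an
arbitrary smooth level-`κ` module.  `(Xₖ)` and `(Xᵏ)` are dual bases of `g` with respect
to the minimal invariant symmetric nondegenerate form `B`, and `h` is the dual Coxeter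
number, i.e. half the eigenvalue of the adjoint action of the Casimir. -/
theorem sugawaraLneg1_comm
    [Module.Finite ℂ g] [LieAlgebra.IsSimple ℂ g]
    (hBnd : B.Nondegenerate)
    (hBsymm : ∀ x y : g, B x y = B y x)
    (hBinv : ∀ x y z : g, B ⁅x, y⁆ z = B x ⁅y, z⁆)
    {ι : Type*} [Fintype ι] [DecidableEq ι] (b : Module.Basis ι ℂ g) (b' : ι → g)
    (hdual : ∀ i j, B (b i) (b' j) = if i = j then 1 else 0)
    (h : ℂ) (hcox : ∀ X : g, ∑ k, ⁅b k, ⁅b' k, X⁆⁆ = (2 * h) • X)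
    (hκ : κ + h ≠ 0)
    (ρ : AffineRepresentation g B κ M) (X : g) (m : ℤ) (v : M) :
    sugawaraLneg1 ρ (⇑b) b' h (ρ.act X m v) - ρ.act X m (sugawaraLneg1 ρ (⇑b) b' h v)
      = (-(m : ℂ)) • ρ.act X (m - 1) v := by
  classical
  obtain ⟨N, hNk⟩ : ∃ N : ℕ, ∀ (k : ι) (n : ℤ), (N : ℤ) ≤ n →
      ρ.act (b k) n v = 0 ∧ ρ.act (b' k) n v = 0 ∧ ρ.act (b k) n (ρ.act X m v) = 0 ∧
      ρ.act (b' k) n (ρ.act X m v) = 0 ∧ ρ.act ⁅b' k, X⁆ n v = 0 := by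
    choose Nf hNf using fun p : g × M => ρ.smooth p.2 p.1
    refine ⟨Finset.univ.sup (fun k : ι => Nf (b k, v) + Nf (b' k, v)
      + Nf (b k, ρ.act X m v) + Nf (b' k, ρ.act X m v) + Nf (⁅b' k, X⁆, v)),
      fun k n hn => ?_⟩
    have hk : Nf (b k, v) + Nf (b' k, v) + Nf (b k, ρ.act X m v) + Nf (b' k, ρ.act X m v)
        + Nf (⁅b' k, X⁆, v) ≤ Finset.univ.sup (fun k : ι => Nf (b k, v) + Nf (b' k, v)
      + Nf (b k, ρ.act X m v) + Nf (b' k, ρ.act X m v) + Nf (⁅b' k, X⁆, v)) :=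
      Finset.le_sup (f := fun k : ι => Nf (b k, v) + Nf (b' k, v)
        + Nf (b k, ρ.act X m v) + Nf (b' k, ρ.act X m v) + Nf (⁅b' k, X⁆, v))
        (Finset.mem_univ k)
    exact ⟨hNf (b k, v) n (by omega), hNf (b' k, v) n (by omega),
      hNf (b k, ρ.act X m v) n (by omega), hNf (b' k, ρ.act X m v) n (by omega),
      hNf (⁅b' k, X⁆, v) n (by omega)⟩
  set R : ℤ := (N : ℤ) + (m.natAbs : ℤ) + 1 with hR
  set s : Finset ℤ := Finset.Ioc (-R) R with hs
  have h2κ : (2 : ℂ) * (κ + h) ≠ 0 := mul_ne_zero two_ne_zero hκ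
  have A1 : sugawaraLneg1 ρ (⇑b) b' h v = (2 * (κ + h))⁻¹ •
      ∑ j ∈ s, ∑ k, (if 1 ≤ j then ρ.act (b k) (-j) (ρ.act (b' k) (j - 1) v)
        else ρ.act (b' k) (j - 1) (ρ.act (b k) (-j) v)) := by
    rw [sugawaraLneg1]
    congr 1
    apply finsum_eq_sum_of_support_subset
    intro j hj
    rw [Function.mem_support] at hj
    rw [Finset.mem_coe, hs, Finset.mem_Ioc]
    by_contra hc
    push_neg at hc
    apply hj
    by_cases hj1 : 1 ≤ j
    · refine Finset.sum_eq_zero fun k _ => ?_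
      rw [if_pos hj1, (hNk k (j - 1) (by omega)).2.1, map_zero]
    · refine Finset.sum_eq_zero fun k _ => ?_
      rw [if_neg hj1, (hNk k (-j) (by omega)).1, map_zero]
  have A2 : sugawaraLneg1 ρ (⇑b) b' h (ρ.act X m v) = (2 * (κ + h))⁻¹ •
      ∑ j ∈ s, ∑ k, (if 1 ≤ j then ρ.act (b k) (-j) (ρ.act (b' k) (j - 1) (ρ.act X m v))
        else ρ.act (b' k) (j - 1) (ρ.act (b k) (-j) (ρ.act X m v))) := by
    rw [sugawaraLneg1]
    congr 1
    apply finsum_eq_sum_of_support_subset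
    intro j hj
    rw [Function.mem_support] at hj
    rw [Finset.mem_coe, hs, Finset.mem_Ioc]
    by_contra hc
    push_neg at hc
    apply hj
    by_cases hj1 : 1 ≤ j
    · refine Finset.sum_eq_zero fun k _ => ?_
      rw [if_pos hj1, (hNk k (j - 1) (by omega)).2.2.2.1, map_zero]
    · refine Finset.sum_eq_zero fun k _ => ?_
      rw [if_neg hj1, (hNk k (-j) (by omega)).2.2.1, map_zero]
  rw [A2, A1, map_smul, map_sum, ← smul_sub, ← Finset.sum_sub_distrib]
  -- dual-basis expansions of X
  have hXL : ∑ k, B (b' k) X • b k = X := by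
    rw [Finset.sum_congr rfl fun k _ => by rw [hBsymm (b' k) X]]
    exact dual_left b b' hdual X
  have hXR : ∑ k, B (b k) X • b' k = X := dual_right hBnd hBsymm b b' hdual X
  -- the two families of contracted operators
  set W : ℤ → M := fun i => ∑ k, ρ.act (b k) (m - i) (ρ.act ⁅b' k, X⁆ (i - 1) v) with hW
  set W' : ℤ → M := fun i => ∑ k, ρ.act ⁅b' k, X⁆ (i - 1) (ρ.act (b k) (m - i) v) with hW'
  -- central contributions
  have e3 : ∀ j : ℤ,
      ∑ k, (if j - 1 + m = 0 then ((j - 1 : ℤ) : ℂ) * B (b' k) X * κ else 0) •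
        ρ.act (b k) (-j) v
      = (if j = 1 - m then (-(m : ℂ) * κ) • ρ.act X (m - 1) v else 0) := by
    intro j
    by_cases hcnd : j = 1 - m
    · rw [if_pos hcnd]
      have hcond : j - 1 + m = 0 := by omega
      have hcast : ((j - 1 : ℤ) : ℂ) = -(m : ℂ) := by
        rw [show (j - 1 : ℤ) = -m by omega]; push_cast; ring
      simp only [if_pos hcond]
      have hterm : ∀ k : ι, (((j - 1 : ℤ) : ℂ) * B (b' k) X * κ) • ρ.act (b k) (-j) v
          = (-(m : ℂ) * κ) • (B (b' k) X • ρ.act (b k) (-j) v) := by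
        intro k
        rw [smul_smul]
        congr 1
        rw [hcast]; ring
      rw [Finset.sum_congr rfl fun k _ => hterm k, ← Finset.smul_sum]
      congr 1
      rw [show -j = m - 1 by omega, ρ.act_comb, hXL]
    · have hcond : ¬(j - 1 + m = 0) := by omega
      simp [hcond, hcnd]
  have e4 : ∀ j : ℤ,
      ∑ k, (if -j + m = 0 then ((-j : ℤ) : ℂ) * B (b k) X * κ else 0) •
        ρ.act (b' k) (j - 1) v
      = (if j = m then (-(m : ℂ) * κ) • ρ.act X (m - 1) v else 0) := by
    intro j
    by_cases hcnd : j = m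
    · rw [if_pos hcnd]
      have hcond : -j + m = 0 := by omega
      have hcast : ((-j : ℤ) : ℂ) = -(m : ℂ) := by
        rw [show (-j : ℤ) = -m by omega]; push_cast; ring
      simp only [if_pos hcond]
      have hterm : ∀ k : ι, (((-j : ℤ) : ℂ) * B (b k) X * κ) • ρ.act (b' k) (j - 1) v
          = (-(m : ℂ) * κ) • (B (b k) X • ρ.act (b' k) (j - 1) v) := by
        intro k
        rw [smul_smul]
        congr 1
        rw [hcast]; ring
      rw [Finset.sum_congr rfl fun k _ => hterm k, ← Finset.smul_sum]
      congr 1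
      rw [show j - 1 = m - 1 by omega, ρ.act_comb, hXR]
    · have hcond : ¬(-j + m = 0) := by omega
      simp [hcond, hcnd]
  -- the per-summand commutator identity
  have hj_id : ∀ j : ℤ,
      (∑ k, (if 1 ≤ j then ρ.act (b k) (-j) (ρ.act (b' k) (j - 1) (ρ.act X m v))
        else ρ.act (b' k) (j - 1) (ρ.act (b k) (-j) (ρ.act X m v))))
      - ρ.act X m (∑ k, (if 1 ≤ j then ρ.act (b k) (-j) (ρ.act (b' k) (j - 1) v)
        else ρ.act (b' k) (j - 1) (ρ.act (b k) (-j) v)))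
      = (if 1 ≤ j then W (j + m) - W j else W' (j + m) - W' j)
        + (if j = 1 - m then (-(m : ℂ) * κ) • ρ.act X (m - 1) v else 0)
        + (if j = m then (-(m : ℂ) * κ) • ρ.act X (m - 1) v else 0) := by
    intro j
    by_cases hj1 : 1 ≤ j
    · simp only [if_pos hj1]
      rw [map_sum, ← Finset.sum_sub_distrib,
        Finset.sum_congr rfl fun k _ => ρ.comm2 (b k) (b' k) X (-j) (j - 1) m v,
        Finset.sum_add_distrib, Finset.sum_add_distrib, Finset.sum_add_distrib,
        e3 j, e4 j]
      have he1 : ∑ k, ρ.act (b k) (-j) (ρ.act ⁅b' k, X⁆ (j - 1 + m) v) = W (j + m) := by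
        simp only [hW]
        rw [show m - (j + m) = -j by ring, show j + m - 1 = j - 1 + m by ring]
      have he2 : ∑ k, ρ.act ⁅b k, X⁆ (-j + m) (ρ.act (b' k) (j - 1) v) = - W j := by
        have hsw := casimir_swap hBnd hBsymm hBinv b b' hdual (ρ.actF (-j + m) (j - 1) v) X
        simp only [AffineRepresentation.actF_apply] at hsw
        rw [hsw]
        simp only [hW]
        rw [show m - j = -j + m by ring]
      rw [he1, he2]
      abel
    · simp only [if_neg hj1]
      rw [map_sum, ← Finset.sum_sub_distrib,
        Finset.sum_congr rfl fun k _ => ρ.comm2 (b' k) (b k) X (j - 1) (-j) m v,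
        Finset.sum_add_distrib, Finset.sum_add_distrib, Finset.sum_add_distrib,
        e3 j, e4 j]
      have he1 : ∑ k, ρ.act ⁅b' k, X⁆ (j - 1 + m) (ρ.act (b k) (-j) v) = W' (j + m) := by
        simp only [hW']
        rw [show m - (j + m) = -j by ring, show j + m - 1 = j - 1 + m by ring]
      have he2 : ∑ k, ρ.act (b' k) (j - 1) (ρ.act ⁅b k, X⁆ (-j + m) v) = - W' j := by
        have hsw := casimir_swap hBnd hBsymm hBinv b b' hdual
          ((ρ.actF (j - 1) (-j + m) v).flip) X
        simp only [LinearMap.flip_apply, AffineRepresentation.actF_apply] at hsw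
        rw [hsw]
        simp only [hW']
        rw [show m - j = -j + m by ring]
      rw [he1, he2]
      abel
  rw [Finset.sum_congr rfl fun j _ => hj_id j, Finset.sum_add_distrib,
    Finset.sum_add_distrib,
    Finset.sum_ite_eq' s (1 - m) (fun _ => (-(m : ℂ) * κ) • ρ.act X (m - 1) v),
    Finset.sum_ite_eq' s m (fun _ => (-(m : ℂ) * κ) • ρ.act X (m - 1) v),
    if_pos (show (1 - m) ∈ s by rw [hs, Finset.mem_Ioc]; omega),
    if_pos (show m ∈ s by rw [hs, Finset.mem_Ioc]; omega)]
  -- telescoping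
  have hWvan : ∀ j : ℤ, max m (N : ℤ) < j → W j = 0 := by
    intro j hj
    simp only [hW]
    refine Finset.sum_eq_zero fun k _ => ?_
    rw [(hNk k (j - 1) (by omega)).2.2.2.2, map_zero]
  have hW'van : ∀ j : ℤ, j ≤ min (m - (N : ℤ)) 0 → W' j = 0 := by
    intro j hj
    simp only [hW']
    refine Finset.sum_eq_zero fun k _ => ?_
    rw [(hNk k (m - j) (by omega)).1, map_zero]
  have htele : ∑ j ∈ s, (if 1 ≤ j then W (j + m) - W j else W' (j + m) - W' j)
      = ∑ j ∈ Ioc 0 m, (W' j - W j) - ∑ j ∈ Ioc m 0, (W' j - W j) := by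
    rw [hs, ← sum_Ioc_consec _ (show -R ≤ 0 by omega) (show (0:ℤ) ≤ R by omega)]
    have hA : ∑ j ∈ Ioc (-R) 0, (if 1 ≤ j then W (j + m) - W j else W' (j + m) - W' j)
        = ∑ j ∈ Ioc (-R) 0, (W' (j + m) - W' j) :=
      Finset.sum_congr rfl fun j hj => if_neg (by have := Finset.mem_Ioc.mp hj; omega)
    have hB : ∑ j ∈ Ioc 0 R, (if 1 ≤ j then W (j + m) - W j else W' (j + m) - W' j)
        = ∑ j ∈ Ioc 0 R, (W (j + m) - W j) :=
      Finset.sum_congr rfl fun j hj => if_pos (by have := Finset.mem_Ioc.mp hj; omega)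
    rw [hA, hB,
      tele_bot W' (min (m - (N : ℤ)) 0) (-R) 0 m hW'van (by omega) (by omega) (by omega)
        (by omega),
      tele_top W (max m (N : ℤ)) 0 R m hWvan (by omega) (by omega) (by omega) (by omega),
      zero_add, Finset.sum_sub_distrib, Finset.sum_sub_distrib]
    abel
  have hWW : ∀ j : ℤ, (m = 1 → j = 1) →
      W' j - W j = (-(2 * h)) • ρ.act X (m - 1) v := by
    intro j hj
    have hcomm : W j - W' j = (2 * h) • ρ.act X (m - 1) v := by
      simp only [hW, hW']
      rw [← Finset.sum_sub_distrib,
        Finset.sum_congr rfl fun k _ => ρ.comm (b k) ⁅b' k, X⁆ (m - j) (j - 1) v,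
        Finset.sum_add_distrib]
      have hz : ∀ k : ι, (if m - j + (j - 1) = 0
          then ((m - j : ℤ) : ℂ) * B (b k) ⁅b' k, X⁆ * κ else 0) • v = 0 := by
        intro k
        by_cases hm1 : m - j + (j - 1) = 0
        · have hm : m = 1 := by omega
          have hj1 : j = 1 := hj hm
          rw [if_pos hm1, show ((m - j : ℤ) : ℂ) = 0 by rw [hm, hj1]; norm_num,
            zero_mul, zero_mul, zero_smul]
        · rw [if_neg hm1, zero_smul]
      rw [Finset.sum_eq_zero fun k _ => hz k, add_zero,
        show m - j + (j - 1) = m - 1 by ring,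
        ← ρ.act_g_sum Finset.univ (fun k => ⁅b k, ⁅b' k, X⁆⁆) (m - 1) v, hcox X,
        ρ.act_g_smul]
    calc W' j - W j = -(W j - W' j) := by abel
    _ = (-(2 * h)) • ρ.act X (m - 1) v := by rw [hcomm, neg_smul]
  have htele2 : ∑ j ∈ Ioc 0 m, (W' j - W j) - ∑ j ∈ Ioc m 0, (W' j - W j)
      = (-(2 * h * m)) • ρ.act X (m - 1) v := by
    rw [Finset.sum_congr rfl (fun j hj => hWW j (fun hm => by
        have := Finset.mem_Ioc.mp hj; omega)),
      Finset.sum_congr rfl (fun j hj => hWW j (fun hm => by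
        have := Finset.mem_Ioc.mp hj; omega)),
      Finset.sum_const, Finset.sum_const, Int.card_Ioc, Int.card_Ioc,
      ← Nat.cast_smul_eq_nsmul ℂ, ← Nat.cast_smul_eq_nsmul ℂ, smul_smul, smul_smul,
      ← sub_smul]
    congr 1
    have hc : (((m - 0).toNat : ℂ)) - (((0 - m).toNat : ℂ)) = (m : ℂ) := by
      have hz : ((m - 0).toNat : ℤ) - ((0 - m).toNat : ℤ) = m := by omega
      calc (((m - 0).toNat : ℂ)) - (((0 - m).toNat : ℂ))
          = ((((m - 0).toNat : ℤ) - ((0 - m).toNat : ℤ) : ℤ) : ℂ) := by push_cast; ring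
      _ = (m : ℂ) := by rw [hz]
    linear_combination (-(2 * h)) * hc
  rw [htele, htele2, ← add_smul, ← add_smul, smul_smul]
  congr 1
  field_simp
  ring
end
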